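/- Let d, K, m be positive integers, Γ ∈ ℝ^{K×K} symmetric positive definite, and let C ∈ ℝ^{(d+K)×(d+K)} be a symmetric positive definite matrix written in blocks C = [[C_uu, C_uw],[C_uwᵀ, C_ww]] with C_uu ∈ ℝ^{d×d}, C_uw ∈ ℝ^{d×K}, C_ww ∈ ℝ^{K×K}. Let H = [0, I_K] ∈ ℝ^{K×(d+K)} and H^⊥ = [I_d, 0] ∈ ℝ^{d×(d+K)}. Let G : ℝ^d → ℝ^K, let A : ℝ^d → ℝ^m be differentiable with Jacobian matrix J_A(u) ∈ ℝ^{m×d}, let û ∈ ℝ^d, y ∈ ℝ^K, and set v̂ = (û, G(û)) ∈ ℝ^{d+K}. Suppose (v, λ) ∈ ℝ^{d+K} × ℝ^m satisfies the stationarity conditions (HᵀΓH + C⁻¹) v − (HᵀΓ y + C⁻¹ v̂) + [J_A(H^⊥v), 0]ᵀ λ = 0 and A(H^⊥ v) = 0. Then u := H^⊥ v satisfies u = û + C_uw (C_ww + Γ⁻¹)⁻¹ (y − G(û)) + C_uw (C_ww + Γ⁻¹)⁻¹ C_uwᵀ J_A(u)ᵀ λ − C_uu J_A(u)ᵀ λ,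 together with A(u) = 0. -/

import Mathlib

open Matrix

/-- First-order necessary optimality conditions for the constrained compromise
step of the ensemble Kalman filter: if `(v, λ)` satisfies the stationarity
conditions of the Lagrangian, then `u = H^⊥ v` satisfies the constrained EnKF
update formula together with `A(u) = 0`. -/
theorem stmt_4 {d K m : ℕ} (hd : 0 < d) (hK : 0 < K) (hm : 0 < m)
    (Γ : Matrix (Fin K) (Fin K) ℝ) (hΓ : Γ.PosDef)
    (Cuu : Matrix (Fin d) (Fin d) ℝ) (Cuw : Matrix (Fin d) (Fin K) ℝ)
    (Cww : Matrix (Fin K) (Fin K) ℝ)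
    (C : Matrix (Fin d ⊕ Fin K) (Fin d ⊕ Fin K) ℝ)
    (hCblocks : C = fromBlocks Cuu Cuw Cuwᵀ Cww)
    (hC : C.PosDef)
    (H : Matrix (Fin K) (Fin d ⊕ Fin K) ℝ) (hH : H = fromCols 0 1)
    (Hperp : Matrix (Fin d) (Fin d ⊕ Fin K) ℝ) (hHperp : Hperp = fromCols 1 0)
    (G : (Fin d → ℝ) → (Fin K → ℝ))
    (A : (Fin d → ℝ) → (Fin m → ℝ))
    (JA : (Fin d → ℝ) → Matrix (Fin m) (Fin d) ℝ)
    (hJA : ∀ u, HasFDerivAt A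
      (LinearMap.toContinuousLinearMap (Matrix.mulVecLin (JA u))) u)
    (uhat : Fin d → ℝ) (y : Fin K → ℝ) (vhat : Fin d ⊕ Fin K → ℝ)
    (hvhat : vhat = Sum.elim uhat (G uhat))
    (v : Fin d ⊕ Fin K → ℝ) (lam : Fin m → ℝ)
    (hstat : (Hᵀ * Γ * H + C⁻¹) *ᵥ v - (Hᵀ *ᵥ (Γ *ᵥ y) + C⁻¹ *ᵥ vhat)
        + (fromCols (JA (Hperp *ᵥ v)) 0)ᵀ *ᵥ lam = 0)
    (hconstr : A (Hperp *ᵥ v) = 0)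
    (u : Fin d → ℝ) (hu : u = Hperp *ᵥ v) :
    u = uhat + (Cuw * (Cww + Γ⁻¹)⁻¹) *ᵥ (y - G uhat)
        + (Cuw * (Cww + Γ⁻¹)⁻¹ * Cuwᵀ * (JA u)ᵀ) *ᵥ lam
        - (Cuu * (JA u)ᵀ) *ᵥ lam
      ∧ A u = 0 := by
  have hΓdet : IsUnit Γ.det := hΓ.det_pos.ne'.isUnit
  have hCdet : IsUnit C.det := hC.det_pos.ne'.isUnit
  -- (Cww + Γ⁻¹) is positive definite, hence invertible
  have hCwwPSD : Cww.PosSemidef := by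
    have h := hC.posSemidef.submatrix Sum.inr
    have : C.submatrix Sum.inr Sum.inr = Cww := by
      rw [hCblocks]; ext i j; simp [fromBlocks]
    rwa [this] at h
  have hS : (Cww + Γ⁻¹).PosDef := Matrix.PosDef.posSemidef_add hCwwPSD hΓ.inv
  have hSdet : IsUnit (Cww + Γ⁻¹).det := hS.det_pos.ne'.isUnit
  obtain ⟨u0, w, hv⟩ : ∃ u0 w, v = Sum.elim u0 w :=
    ⟨_, _, funext fun x => by cases x <;> rfl⟩
  subst hv hH hHperp hvhat
  have hHp : fromCols (1 : Matrix (Fin d) (Fin d) ℝ) 0 *ᵥ Sum.elim u0 w = u0 := by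
    rw [fromCols_mulVec_sumElim]; simp
  rw [hHp] at hstat hconstr hu
  subst hu
  refine ⟨?_, hconstr⟩
  obtain ⟨q, hq⟩ : ∃ q : Fin d → ℝ, q = (JA u)ᵀ *ᵥ lam := ⟨_, rfl⟩
  have hHv : fromCols (0 : Matrix (Fin K) (Fin d) ℝ) 1 *ᵥ Sum.elim u w = w := by
    rw [fromCols_mulVec_sumElim]; simp
  have hX : ((fromCols 0 1 : Matrix (Fin K) (Fin d ⊕ Fin K) ℝ)ᵀ * Γ *
      (fromCols 0 1 : Matrix (Fin K) (Fin d ⊕ Fin K) ℝ)) *ᵥ Sum.elim u w = Sum.elim (0 : Fin d → ℝ) (Γ *ᵥ w) := by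
    rw [← mulVec_mulVec, ← mulVec_mulVec, hHv, transpose_fromCols, transpose_zero,
      transpose_one, fromRows_mulVec, zero_mulVec, one_mulVec]
  have hb : (fromCols 0 1 : Matrix (Fin K) (Fin d ⊕ Fin K) ℝ)ᵀ *ᵥ (Γ *ᵥ y)
      = Sum.elim (0 : Fin d → ℝ) (Γ *ᵥ y) := by
    rw [transpose_fromCols, transpose_zero, transpose_one, fromRows_mulVec,
      zero_mulVec, one_mulVec]
  have hT : (fromCols (JA u) (0 : Matrix (Fin m) (Fin K) ℝ))ᵀ *ᵥ lam
      = Sum.elim q (0 : Fin K → ℝ) := by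
    rw [transpose_fromCols, fromRows_mulVec, transpose_zero, zero_mulVec, hq]
  have hCel : ∀ (a : Fin d → ℝ) (b : Fin K → ℝ),
      C *ᵥ Sum.elim a b = Sum.elim (Cuu *ᵥ a + Cuw *ᵥ b) (Cuwᵀ *ᵥ a + Cww *ᵥ b) := by
    intro a b; rw [hCblocks, fromBlocks_mulVec]; simp [Sum.elim_comp_inl, Sum.elim_comp_inr]
  have hCinv : ∀ x : Fin d ⊕ Fin K → ℝ, C *ᵥ (C⁻¹ *ᵥ x) = x := by
    intro x; rw [mulVec_mulVec, mul_nonsing_inv _ hCdet, one_mulVec]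
  have h2 := congrArg (fun x => C *ᵥ x) hstat
  simp only [add_mulVec, hX, hb, hT, mulVec_add, mulVec_sub, hCinv, mulVec_zero,
    hCel, zero_add, add_zero] at h2
  -- extract the two block components
  have eq1 : ∀ i, (Cuw *ᵥ (Γ *ᵥ w)) i + u i - ((Cuw *ᵥ (Γ *ᵥ y)) i + uhat i)
      + (Cuu *ᵥ q) i = 0 := by
    intro i
    have := congrFun h2 (Sum.inl i)
    simpa using this
  have eq2 : ∀ k, (Cww *ᵥ (Γ *ᵥ w)) k + w k - ((Cww *ᵥ (Γ *ᵥ y)) k + (G uhat) k)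
      + (Cuwᵀ *ᵥ q) k = 0 := by
    intro k
    have := congrFun h2 (Sum.inr k)
    simpa using this
  obtain ⟨z, hzdef⟩ : ∃ z : Fin K → ℝ, z = Γ *ᵥ (y - w) := ⟨_, rfl⟩
  have hz1 : Γ⁻¹ *ᵥ z = y - w := by
    rw [hzdef, mulVec_mulVec, nonsing_inv_mul _ hΓdet, one_mulVec]
  have hSz : (Cww + Γ⁻¹) *ᵥ z = (y - G uhat) + Cuwᵀ *ᵥ q := by
    funext k
    have h3 : ((Cww + Γ⁻¹) *ᵥ z) k = (Cww *ᵥ (Γ *ᵥ y)) k - (Cww *ᵥ (Γ *ᵥ w)) k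
        + (y k - w k) := by
      rw [add_mulVec]
      have hz2 : Cww *ᵥ z = Cww *ᵥ (Γ *ᵥ y) - Cww *ᵥ (Γ *ᵥ w) := by
        rw [hzdef, mulVec_sub, mulVec_sub]
      rw [hz1]
      simp [hz2]
    have h4 := eq2 k
    simp only [Pi.add_apply, Pi.sub_apply] at h3 ⊢
    rw [h3]; linarith
  have hzval : z = (Cww + Γ⁻¹)⁻¹ *ᵥ ((y - G uhat) + Cuwᵀ *ᵥ q) := by
    rw [← hSz, mulVec_mulVec, nonsing_inv_mul _ hSdet, one_mulVec]
  have hfinal : u = uhat + Cuw *ᵥ z - Cuu *ᵥ q := by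
    funext i
    have h5 := eq1 i
    have h6 : (Cuw *ᵥ z) i = (Cuw *ᵥ (Γ *ᵥ y)) i - (Cuw *ᵥ (Γ *ᵥ w)) i := by
      have : Cuw *ᵥ z = Cuw *ᵥ (Γ *ᵥ y) - Cuw *ᵥ (Γ *ᵥ w) := by
        rw [hzdef, mulVec_sub, mulVec_sub]
      simp [this]
    simp only [Pi.add_apply, Pi.sub_apply]
    linarith
  simp only [← mulVec_mulVec]
  rw [← hq, hfinal, hzval]
  simp only [mulVec_add]
  abel
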